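/- Let φ = C_1 ∧ … ∧ C_m be a Boolean formula in conjunctive normal form over variables X_1, …, X_n with m ≥ 1 and each clause nonempty. Then φ is satisfiable if and only if (G_φ, C_1) has a pure Nash equilibrium with expected payoff ≥ 1 for player 0. -/

import Mathlib

open MeasureTheory Filter

noncomputable section

instance : Fact ((0:ℝ) < 1) := ⟨one_pos⟩

/-- The source of randomness used to run strategies: a countable product of circle groups,
which is a compact group, equipped below with its normalised Haar measure.  Under this
measure the coordinates (read as reals in `[0,1)`) are i.i.d. uniform random variables. -/
abbrev USpace : Type := ℕ → AddCircle (1:ℝ)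

/-- The normalised Haar (probability) measure on `USpace`. -/
def uHaar : Measure USpace :=
  ((Measure.addHaar (G := USpace)) Set.univ)⁻¹ • Measure.addHaar

/-- The `n`-th uniform coordinate, as a real number in `[0,1)`. -/
def coordReal (u : USpace) (n : ℕ) : ℝ := ((AddCircle.equivIco 1 0) (u n) : ℝ)

/-- A concurrent game with players `P`, states `S` and actions `A` (all finite and nonempty):
each player `i` has a nonempty set `act i s` of actions available at each state `s`, there is a
transition function `tr` and a reward function `rew i` for each player. -/
structure ConcurrentGame (P S A : Type) [Fintype P] [Nonempty P] [Fintype S] [Nonempty S]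
    [Fintype A] [Nonempty A] : Type where
  act : P → S → Set A
  act_nonempty : ∀ i s, (act i s).Nonempty
  tr : S → (P → A) → S
  rew : P → S → ℝ

/-- A history (without its final state): the list of (state, action profile) pairs seen so far,
in chronological order. -/
abbrev Hist (P S A : Type) := List (S × (P → A))

variable {P S A : Type} [Fintype P] [Nonempty P] [Fintype S] [Nonempty S]
  [Fintype A] [Nonempty A] [DecidableEq P]

namespace ConcurrentGame

/-- A (randomised) strategy of player `i`: for every history `x` and current state `s`,
a probability distribution on actions, supported on the available actions `act i s`. -/
structure Strategy (G : ConcurrentGame P S A) (i : P) where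
  prob : Hist P S A → S → A → ℝ
  nonneg : ∀ x s a, 0 ≤ prob x s a
  sum_one : ∀ x s, ∑ a, prob x s a = 1
  supp : ∀ x s a, prob x s a ≠ 0 → a ∈ G.act i s

variable {G : ConcurrentGame P S A}

/-- A pure strategy: every prescribed distribution is degenerate. -/
def Strategy.IsPure {i : P} (σ : Strategy G i) : Prop := ∀ x s, ∃ a, σ.prob x s a = 1

/-- A stationary strategy: depends only on the current state. -/
def Strategy.IsStationary {i : P} (σ : Strategy G i) : Prop :=
  ∀ x y s, σ.prob x s = σ.prob y s

/-- A positional strategy: pure and stationary. -/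
def Strategy.IsPositional {i : P} (σ : Strategy G i) : Prop :=
  σ.IsPure ∧ σ.IsStationary

end ConcurrentGame

/-- A strategy profile: one strategy for each player. -/
abbrev Profile (G : ConcurrentGame P S A) := ∀ i : P, G.Strategy i

namespace ConcurrentGame

def IsPureProfile {G : ConcurrentGame P S A} (σ : Profile G) : Prop := ∀ i, (σ i).IsPure
def IsStationaryProfile {G : ConcurrentGame P S A} (σ : Profile G) : Prop :=
  ∀ i, (σ i).IsStationary
def IsPositionalProfile {G : ConcurrentGame P S A} (σ : Profile G) : Prop :=
  ∀ i, (σ i).IsPositional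

variable (G : ConcurrentGame P S A)

/-- An action profile is legal at `s` if each player's action is available to her. -/
def Legal (s : S) (a : P → A) : Prop := ∀ i, a i ∈ G.act i s

/-- A play of the game: an infinite sequence of (state, action profile) pairs such that every
action profile is legal and consecutive states are related by the transition function. -/
def IsPlay (π : ℕ → S × (P → A)) : Prop :=
  ∀ n, G.Legal (π n).1 (π n).2 ∧ (π (n + 1)).1 = G.tr (π n).1 (π n).2

/-- The limit-average (mean) payoff of player `i` along a sequence of states. -/
def payOf (i : P) (ss : ℕ → S) : ℝ :=
  Filter.liminf (fun n : ℕ => (∑ j ∈ Finset.range n, G.rew i (ss j)) / n) Filter.atTop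

/-- The probability that profile `a` is played after history `(x, s)` under profile `σ`. -/
def weight (σ : Profile G) (x : Hist P S A) (s : S) (a : P → A) : ℝ :=
  ∏ i, (σ i).prob x s (a i)

/-- cumulative distribution of `f` w.r.t. a fixed enumeration of action profiles. -/
def cum (f : (P → A) → ℝ) (k : ℕ) : ℝ :=
  ∑ b ∈ Finset.univ.filter (fun b => ((Fintype.equivFin (P → A)) b : ℕ) < k), f b

/-- Sample an action profile from the distribution `f` via inverse-cdf transform of `u ∈ [0,1)`. -/
def pick (f : (P → A) → ℝ) (u : ℝ) : P → A :=
  (Fintype.equivFin (P → A)).symm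
    (if h : (Finset.univ.filter
          (fun k : Fin (Fintype.card (P → A)) => cum (P := P) (A := A) f ((k : ℕ) + 1) ≤ u)).card
        < Fintype.card (P → A)
      then ⟨_, h⟩ else ⟨0, Fintype.card_pos⟩)

/-- The history induced from initial state `s₀` by a finite sequence of action profiles. -/
def histOf (s₀ : S) : List (P → A) → Hist P S A × S
  | [] => ([], s₀)
  | a :: l =>
    let h : Hist P S A × S := histOf (G.tr s₀ a) l
    ((s₀, a) :: h.1, h.2)

/-- The first `n` action profiles of the play run by profile `σ` from `s₀`,
driven by the source of randomness `u`. -/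
def samplePrefix (σ : Profile G) (s₀ : S) (u : USpace) : ℕ → List (P → A)
  | 0 => []
  | n + 1 =>
    let l : List (P → A) := samplePrefix σ s₀ u n
    let h : Hist P S A × S := G.histOf s₀ l
    l ++ [pick (G.weight σ h.1 h.2) (coordReal u n)]

/-- The state at time `n` of the play run by `σ` from `s₀` with randomness `u`. -/
def stateAt (σ : Profile G) (s₀ : S) (u : USpace) (n : ℕ) : S :=
  (G.histOf s₀ (G.samplePrefix σ s₀ u n)).2

/-- The expected (limit-average) payoff of player `i` under the strategy profile `σ`,
starting from `s₀`: the integral of the mean payoff over the induced measure on plays. -/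
def expPay (σ : Profile G) (s₀ : S) (i : P) : ℝ :=
  ∫ u, G.payOf i (G.stateAt σ s₀ u) ∂uHaar

/-- The probability that the play under `σ` from `s₀` ever visits the set `T` of states. -/
def probVisit (σ : Profile G) (s₀ : S) (T : Set S) : ℝ :=
  (uHaar {u | ∃ n, G.stateAt σ s₀ u n ∈ T}).toReal

/-- A Nash equilibrium: no player can increase her expected payoff by unilaterally
switching to another strategy. -/
def IsNash (σ : Profile G) (s₀ : S) : Prop :=
  ∀ (i : P) (τ : G.Strategy i),
    G.expPay (Function.update σ i τ) s₀ i ≤ G.expPay σ s₀ i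

/-- `pval i s`: the least payoff the coalition of all other players can inflict on player `i`
using pure strategy profiles, when the game starts at `s`. -/
def pval (i : P) (s : S) : ℝ :=
  ⨅ σ : {σ : Profile G // IsPureProfile σ}, ⨆ τ : G.Strategy i,
    G.expPay (Function.update σ.1 i τ) s i

/-- A state is terminal if every legal action profile leads back to it. -/
def Terminal (s : S) : Prop := ∀ a, G.Legal s a → G.tr s a = s

/-- A terminal-reward game: non-zero rewards occur only at terminal states. -/
def IsTerminalReward : Prop := ∀ (i : P) (s : S), ¬ G.Terminal s → G.rew i s = 0

/-- `a` is `z`-secure at `s`: `a` is legal at `s`, and whenever a single player `i` deviates to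
some available action `b`, the resulting state has `pval i ≤ z i`. -/
def zSecure (z : P → EReal) (s : S) (a : P → A) : Prop :=
  G.Legal s a ∧
    ∀ (i : P), ∀ b ∈ G.act i s, (G.pval i (G.tr s (Function.update a i b)) : EReal) ≤ z i

/-- The edge relation of the graph `G(z)`: an edge from `s` to `t` iff some `z`-secure action
profile at `s` leads to `t`. -/
def secureEdge (z : P → EReal) (s t : S) : Prop :=
  ∃ a, G.zSecure z s a ∧ G.tr s a = t

end ConcurrentGame

end

/-! ## The SAT game `G_φ` -/

noncomputable section

/-- A literal over `n` variables: `(true, i)` is the positive literal `Xᵢ` and `(false, i)`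
is the negative literal `¬Xᵢ`. -/
abbrev Lit (n : ℕ) := Bool × Fin n

/-- States of `G_φ`: clause states `C_j` (`j : Fin m`), literal states `(C_j, L)` and the
terminal state `⊥`. -/
abbrev SatState (n m : ℕ) := Fin m ⊕ (Fin m × Lit n) ⊕ Unit

/-- Actions of `G_φ`: at a clause state player 0 chooses a literal of the clause
(action `Sum.inl L`); at a literal state the controlling player either moves on to the next
clause (action `Sum.inr false`) or — at a negative literal state — quits to `⊥`
(action `Sum.inr true`). -/
abbrev SatAct (n : ℕ) := Lit n ⊕ Bool

instance {n m : ℕ} : Nonempty (SatState n m) := ⟨Sum.inr (Sum.inr ())⟩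
instance {n : ℕ} : Nonempty (SatAct n) := ⟨Sum.inr false⟩

/-- The turn-based game `G_φ` for a CNF formula `φ` with `m ≥ 1` clauses (given as nonempty
finite sets of literals) over `n` variables.  Players are `0, 1, …, n`.  Player 0 controls the
clause states, where she chooses a literal occurring in the clause; the literal state
`(C, L)` with `L = Xᵢ` or `L = ¬Xᵢ` is controlled by player `i`, who can move on to the next
clause state (cyclically), and from a negative literal state can also quit to the terminal
state `⊥`.  Player 0 gets reward 1 everywhere except at `⊥`, where she gets 0; player `i ≥ 1`
gets reward 1 everywhere except at the positive literal states `(C, Xᵢ)`, where she gets 0. -/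
def satGame (n m : ℕ) (hm : 0 < m) (φ : Fin m → Finset (Lit n))
    (hφ : ∀ j, (φ j).Nonempty) :
    ConcurrentGame (Fin (n + 1)) (SatState n m) (SatAct n) where
  act i s :=
    match s with
    | .inl j => if i = 0 then Sum.inl '' (φ j : Set (Lit n)) else {Sum.inr false}
    | .inr (.inl (_, (b, v))) =>
      if i = Fin.succ v ∧ b = false then {Sum.inr false, Sum.inr true} else {Sum.inr false}
    | .inr (.inr _) => {Sum.inr false}
  act_nonempty i s := by
    rcases s with j | ⟨j, b, v⟩ | u
    · dsimp only; split
      · exact ((Finset.coe_nonempty).mpr (hφ j)).image _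
      · exact Set.singleton_nonempty _
    · dsimp only; split
      · exact ⟨Sum.inr false, Set.mem_insert _ _⟩
      · exact Set.singleton_nonempty _
    · exact Set.singleton_nonempty _
  tr s a :=
    match s with
    | .inl j =>
      match a 0 with
      | .inl L => .inr (.inl (j, L))
      | .inr _ => .inl j
    | .inr (.inl (j, (b, v))) =>
      if b = false ∧ a (Fin.succ v) = Sum.inr true then .inr (.inr ())
      else .inl ⟨(j.val + 1) % m, Nat.mod_lt _ hm⟩
    | .inr (.inr u) => .inr (.inr u)
  rew i s :=
    if i = 0 then
      match s with
      | .inr (.inr _) => 0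
      | _ => 1
    else
      match s with
      | .inr (.inl (_, (b, v))) => if b = true ∧ Fin.succ v = i then 0 else 1
      | _ => 1

/-- `φ` is satisfiable: some assignment makes a literal of every clause true. -/
def SatSatisfiable (n m : ℕ) (φ : Fin m → Finset (Lit n)) : Prop :=
  ∃ α : Fin n → Bool, ∀ j, ∃ L ∈ φ j, α L.2 = L.1


/-! ## Auxiliary infrastructure -/

section Aux

open Filter MeasureTheory

instance : IsProbabilityMeasure uHaar := by
  constructor
  have h0 : (Measure.addHaar (G := USpace)) Set.univ ≠ 0 := by
    have := (isOpen_univ.measure_pos (Measure.addHaar (G := USpace))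
      (Set.univ_nonempty)).ne'
    exact this
  have h1 : (Measure.addHaar (G := USpace)) Set.univ ≠ ⊤ :=
    (isCompact_univ.measure_lt_top).ne
  simp only [uHaar, Measure.smul_apply, smul_eq_mul]
  exact ENNReal.inv_mul_cancel h0 h1

lemma coordReal_mem (u : USpace) (n : ℕ) : coordReal u n ∈ Set.Ico (0:ℝ) 1 := by
  have := ((AddCircle.equivIco (1:ℝ) 0) (u n)).2
  simpa [coordReal] using this

end Aux

section PickLemmas

variable {P S A : Type} [Fintype P] [Nonempty P] [Fintype S] [Nonempty S]
  [Fintype A] [Nonempty A] [DecidableEq P]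

namespace ConcurrentGame

lemma cum_mono (f : (P → A) → ℝ) (hf : ∀ b, 0 ≤ f b) : Monotone (cum (P := P) (A := A) f) := by
  intro k l hkl
  apply Finset.sum_le_sum_of_subset_of_nonneg
  · intro b hb
    simp only [Finset.mem_filter, Finset.mem_univ, true_and] at hb ⊢
    omega
  · intro b _ _; exact hf b

lemma cum_zero (f : (P → A) → ℝ) : cum (P := P) (A := A) f 0 = 0 := by
  simp [cum]

lemma cum_card (f : (P → A) → ℝ) :
    cum (P := P) (A := A) f (Fintype.card (P → A)) = ∑ b, f b := by
  unfold cum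
  rw [Finset.filter_true_of_mem]
  intro b _
  exact (Fintype.equivFin (P → A) b).2

lemma cum_succ (f : (P → A) → ℝ) (j : Fin (Fintype.card (P → A))) :
    cum (P := P) (A := A) f ((j : ℕ) + 1)
      = cum (P := P) (A := A) f (j : ℕ) + f ((Fintype.equivFin (P → A)).symm j) := by
  classical
  set e := Fintype.equivFin (P → A)
  have : (Finset.univ.filter (fun b => ((e b : Fin _) : ℕ) < (j : ℕ) + 1))
      = insert (e.symm j) (Finset.univ.filter (fun b => ((e b : Fin _) : ℕ) < (j : ℕ))) := by
    ext b
    simp only [Finset.mem_filter, Finset.mem_univ, true_and, Finset.mem_insert]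
    constructor
    · intro h
      rcases Nat.lt_succ_iff_lt_or_eq.1 h with h | h
      · exact Or.inr h
      · exact Or.inl ((Equiv.eq_symm_apply e).mpr (Fin.ext h))
    · rintro (rfl | h)
      · simp
      · omega
  rw [cum, this, Finset.sum_insert (by simp), cum, add_comm]

lemma pick_pos (f : (P → A) → ℝ) (hf : ∀ b, 0 ≤ f b) (hsum : ∑ b, f b = 1)
    {u : ℝ} (hu0 : 0 ≤ u) (hu1 : u < 1) : 0 < f (pick (P := P) (A := A) f u) := by
  classical
  set N := Fintype.card (P → A) with hN
  set e := Fintype.equivFin (P → A) with he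
  have hNpos : 0 < N := Fintype.card_pos
  set T : Finset (Fin N) :=
    Finset.univ.filter (fun k : Fin N => cum (P := P) (A := A) f ((k : ℕ) + 1) ≤ u) with hT
  -- T.card < N
  have hlast : (⟨N - 1, by omega⟩ : Fin N) ∉ T := by
    simp only [hT, Finset.mem_filter, Finset.mem_univ, true_and, not_le]
    have : N - 1 + 1 = N := by omega
    rw [this, cum_card, hsum]; exact hu1
  have hcard : T.card < N := by
    have : T ⊆ Finset.univ.erase ⟨N - 1, by omega⟩ :=
      fun k hk => Finset.mem_erase.2 ⟨fun h => hlast (h ▸ hk), Finset.mem_univ _⟩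
    calc T.card ≤ (Finset.univ.erase (⟨N - 1, by omega⟩ : Fin N)).card :=
          Finset.card_le_card this
      _ < N := by
          rw [Finset.card_erase_of_mem (Finset.mem_univ _)]
          simp [← hN]; omega
  have hpick : pick (P := P) (A := A) f u = e.symm ⟨T.card, hcard⟩ := by
    rw [pick]
    rw [dif_pos]
  set j : Fin N := ⟨T.card, hcard⟩ with hj
  -- cum (j+1) > u
  have hup : u < cum (P := P) (A := A) f ((j : ℕ) + 1) := by
    by_contra h
    push_neg at h
    have hjT : j ∈ T := by simp [hT, h]
    have hsub : Finset.Iic j ⊆ T := by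
      intro k hk
      simp only [Finset.mem_Iic] at hk
      simp only [hT, Finset.mem_filter, Finset.mem_univ, true_and]
      exact le_trans (cum_mono f hf (by exact_mod_cast Nat.add_le_add_right hk 1)) h
    have : (Finset.Iic j).card ≤ T.card := Finset.card_le_card hsub
    have hIic : T.card + 1 ≤ (Finset.Iic j).card := by
      have : Finset.range (T.card + 1) ⊆ Finset.image Fin.val (Finset.Iic j) := by
        intro q hq
        simp only [Finset.mem_range] at hq
        simp only [Finset.mem_image]
        refine ⟨⟨q, by omega⟩, ?_, rfl⟩
        simp only [Finset.mem_Iic]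
        exact Fin.mk_le_mk.2 (by omega)
      calc T.card + 1 = (Finset.range (T.card + 1)).card := by simp
        _ ≤ (Finset.image Fin.val (Finset.Iic j)).card := Finset.card_le_card this
        _ ≤ (Finset.Iic j).card := Finset.card_image_le
    omega
  -- cum j ≤ u
  have hdn : cum (P := P) (A := A) f (j : ℕ) ≤ u := by
    rcases Nat.eq_zero_or_pos T.card with h0 | hpos
    · have : (j : ℕ) = 0 := h0
      rw [this, cum_zero]; exact hu0
    · by_contra h
      push_neg at h
      have hTsub : T ⊆ Finset.univ.filter (fun k : Fin N => (k : ℕ) < T.card - 1) := by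
        intro k hk
        simp only [hT, Finset.mem_filter, Finset.mem_univ, true_and] at hk
        simp only [Finset.mem_filter, Finset.mem_univ, true_and]
        by_contra hk2
        push_neg at hk2
        have hle : (j : ℕ) ≤ (k : ℕ) + 1 := by simp only [hj]; omega
        have := le_trans (cum_mono f hf hle) hk
        exact absurd this (not_le.2 h)
      have hcard2 : T.card ≤ T.card - 1 := by
        calc T.card ≤ (Finset.univ.filter (fun k : Fin N => (k : ℕ) < T.card - 1)).card :=
              Finset.card_le_card hTsub
          _ ≤ T.card - 1 := by
              have : ∀ k ∈ Finset.univ.filter (fun k : Fin N => (k : ℕ) < T.card - 1),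
                  (k : ℕ) ∈ Finset.range (T.card - 1) := by
                intro k hk
                simp only [Finset.mem_filter, Finset.mem_univ, true_and] at hk
                simpa using hk
              calc (Finset.univ.filter (fun k : Fin N => (k : ℕ) < T.card - 1)).card
                  ≤ (Finset.range (T.card - 1)).card :=
                    Finset.card_le_card_of_injOn Fin.val this
                      (fun a _ b _ hab => Fin.ext hab)
                _ = T.card - 1 := by simp
      omega
  have := cum_succ f j
  rw [hpick]
  have : f (e.symm j) = cum (P := P) (A := A) f ((j : ℕ) + 1) - cum (P := P) (A := A) f (j : ℕ) := by
    rw [cum_succ f j]; ring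
  rw [this]
  linarith

end ConcurrentGame

end PickLemmas


/-! ## Liminf-average lemmas -/

section LiminfAvg

open Filter

variable {r : ℕ → ℝ}

private lemma avg_nonneg (h0 : ∀ t, 0 ≤ r t) (n : ℕ) :
    0 ≤ (∑ j ∈ Finset.range n, r j) / n :=
  div_nonneg (Finset.sum_nonneg fun j _ => h0 j) (Nat.cast_nonneg n)

private lemma avg_le_one (h1 : ∀ t, r t ≤ 1) (n : ℕ) :
    (∑ j ∈ Finset.range n, r j) / n ≤ 1 := by
  rcases Nat.eq_zero_or_pos n with rfl | hn
  · simp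
  · rw [div_le_one (by exact_mod_cast hn)]
    calc ∑ j ∈ Finset.range n, r j ≤ ∑ _j ∈ Finset.range n, (1:ℝ) :=
          Finset.sum_le_sum fun j _ => h1 j
      _ = n := by simp

lemma liminf_avg_le_one (h0 : ∀ t, 0 ≤ r t) (h1 : ∀ t, r t ≤ 1) :
    Filter.liminf (fun n : ℕ => (∑ j ∈ Finset.range n, r j) / n) Filter.atTop ≤ 1 := by
  have := Filter.liminf_le_liminf (f := Filter.atTop)
    (u := fun n : ℕ => (∑ j ∈ Finset.range n, r j) / n) (v := fun _ : ℕ => (1:ℝ))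
    (Filter.Eventually.of_forall (fun n : ℕ => avg_le_one h1 n))
    (Filter.isBoundedUnder_of ⟨0, fun n => avg_nonneg h0 n⟩)
    ((Filter.isBoundedUnder_of ⟨1, fun _ : ℕ => le_refl (1:ℝ)⟩).isCoboundedUnder_ge)
  simpa using this

lemma liminf_avg_ge_one (h0 : ∀ t, 0 ≤ r t) (h1 : ∀ t, r t ≤ 1) (N : ℕ)
    (hev : ∀ t, N ≤ t → r t = 1) :
    1 ≤ Filter.liminf (fun n : ℕ => (∑ j ∈ Finset.range n, r j) / n) Filter.atTop := by
  set g : ℕ → ℝ := fun n => ((n : ℝ) - N) / n with hg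
  have hgt : Tendsto g atTop (nhds 1) := by
    have h2 : Tendsto (fun n : ℕ => 1 - (N : ℝ) * (1 / n)) atTop (nhds 1) := by
      have h3 := (tendsto_const_nhds (x := (1:ℝ))).sub
        ((tendsto_one_div_atTop_nhds_zero_nat).const_mul (N : ℝ))
      simpa using h3
    apply h2.congr'
    filter_upwards [eventually_ge_atTop 1] with n hn
    have hne : (n : ℝ) ≠ 0 := by positivity
    simp only [hg]; field_simp
  have hle : ∀ n : ℕ, g n ≤ (∑ j ∈ Finset.range n, r j) / n := by
    intro n
    apply div_le_div_of_nonneg_right _ (Nat.cast_nonneg n)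
    by_cases hnN : n ≤ N
    · have : (n : ℝ) - N ≤ 0 := by
        have : (n:ℝ) ≤ N := by exact_mod_cast hnN
        linarith
      exact le_trans this (Finset.sum_nonneg fun j _ => h0 j)
    · push_neg at hnN
      have hsub : Finset.range N ⊆ Finset.range n := Finset.range_subset_range.2 hnN.le
      have h1' : ∑ j ∈ Finset.range n \ Finset.range N, r j
          = ((Finset.range n \ Finset.range N).card : ℝ) := by
        have hall : ∀ j ∈ Finset.range n \ Finset.range N, r j = 1 := by
          intro j hj
          rcases Finset.mem_sdiff.1 hj with ⟨_, hj2⟩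
          exact hev j (by simpa using hj2)
        rw [Finset.sum_congr rfl hall]
        simp
      have hcard : ((Finset.range n \ Finset.range N).card : ℝ) = (n : ℝ) - N := by
        rw [Finset.card_sdiff_of_subset hsub]
        simp only [Finset.card_range]
        rw [Nat.cast_sub hnN.le]
      calc (n : ℝ) - N = ∑ j ∈ Finset.range n \ Finset.range N, r j := by rw [h1', hcard]
        _ ≤ ∑ j ∈ Finset.range n, r j :=
            Finset.sum_le_sum_of_subset_of_nonneg (Finset.sdiff_subset)
              (fun j _ _ => h0 j)
  calc (1:ℝ) = liminf g atTop := (hgt.liminf_eq).symm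
    _ ≤ _ := Filter.liminf_le_liminf (Filter.Eventually.of_forall hle)
        (hgt.isBoundedUnder_ge)
        ((Filter.isBoundedUnder_of ⟨1, fun n => avg_le_one h1 n⟩).isCoboundedUnder_ge)

lemma liminf_avg_le_zero (h0 : ∀ t, 0 ≤ r t) (h1 : ∀ t, r t ≤ 1) (N : ℕ)
    (hev : ∀ t, N ≤ t → r t = 0) :
    Filter.liminf (fun n : ℕ => (∑ j ∈ Finset.range n, r j) / n) Filter.atTop ≤ 0 := by
  classical
  set g : ℕ → ℝ := fun n => (N : ℝ) / n with hg
  have hgt : Tendsto g atTop (nhds 0) := by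
    have := (tendsto_one_div_atTop_nhds_zero_nat).const_mul (N : ℝ)
    simpa [hg, div_eq_mul_inv, mul_comm] using this
  have hle : ∀ n : ℕ, (∑ j ∈ Finset.range n, r j) / n ≤ g n := by
    intro n
    apply div_le_div_of_nonneg_right _ (Nat.cast_nonneg n)
    have h2 : ∑ j ∈ Finset.range n, r j
        = ∑ j ∈ (Finset.range n).filter (fun j => j < N), r j := by
      rw [Finset.sum_filter_of_ne]
      intro j _ hj
      by_contra h
      push_neg at h
      exact hj (hev j h)
    rw [h2]
    calc ∑ j ∈ (Finset.range n).filter (fun j => j < N), r j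
        ≤ ∑ _j ∈ (Finset.range n).filter (fun j => j < N), (1:ℝ) :=
          Finset.sum_le_sum fun j _ => h1 j
      _ = ((Finset.range n).filter (fun j => j < N)).card := by simp
      _ ≤ (N : ℝ) := by
          have : (Finset.range n).filter (fun j => j < N) ⊆ Finset.range N := by
            intro j hj
            simp only [Finset.mem_filter, Finset.mem_range] at hj ⊢
            exact hj.2
          have h4 := Finset.card_le_card this
          rw [Finset.card_range] at h4
          exact_mod_cast h4
  calc Filter.liminf (fun n : ℕ => (∑ j ∈ Finset.range n, r j) / n) Filter.atTop
      ≤ liminf g atTop := Filter.liminf_le_liminf (Filter.Eventually.of_forall hle)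
        (Filter.isBoundedUnder_of ⟨0, fun n => avg_nonneg h0 n⟩)
        ((hgt.isBoundedUnder_le).isCoboundedUnder_ge)
    _ = 0 := hgt.liminf_eq

lemma tendsto_cnt_of_liminf {cnt : ℕ → ℕ}
    (hcnt : ∀ n, cnt n ≤ n ∧ (∑ j ∈ Finset.range n, r j) = (n : ℝ) - cnt n)
    (hl : 1 ≤ Filter.liminf (fun n : ℕ => (∑ j ∈ Finset.range n, r j) / n) Filter.atTop) :
    Tendsto (fun n : ℕ => (cnt n : ℝ) / n) atTop (nhds 0) := by
  set u : ℕ → ℝ := fun n => (∑ j ∈ Finset.range n, r j) / n with hu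
  have hub : ∀ n, u n ≤ 1 := by
    intro n
    rcases Nat.eq_zero_or_pos n with rfl | hn
    · simp [hu]
    · rw [hu]
      simp only
      rw [div_le_one (by exact_mod_cast hn), (hcnt n).2]
      have : (0:ℝ) ≤ cnt n := Nat.cast_nonneg _
      linarith
  rw [tendsto_order]
  constructor
  · intro a ha
    filter_upwards with n
    exact lt_of_lt_of_le ha (div_nonneg (Nat.cast_nonneg _) (Nat.cast_nonneg _))
  · intro ε hε
    have hlb : ∀ n, 0 ≤ u n := by
      intro n
      show 0 ≤ (∑ j ∈ Finset.range n, r j) / n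
      have h5 : ((cnt n : ℝ)) ≤ n := by exact_mod_cast (hcnt n).1
      have h6 : (0:ℝ) ≤ ∑ j ∈ Finset.range n, r j := by rw [(hcnt n).2]; linarith
      exact div_nonneg h6 (Nat.cast_nonneg n)
    have hev : ∀ᶠ n in atTop, 1 - ε < u n :=
      Filter.eventually_lt_of_lt_liminf (lt_of_lt_of_le (by linarith) hl)
        (Filter.isBoundedUnder_of ⟨0, hlb⟩)
    filter_upwards [hev, eventually_ge_atTop 1] with n h1n h2n
    have hne : (n : ℝ) ≠ 0 := by positivity
    have : u n = 1 - (cnt n : ℝ) / n := by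
      rw [hu]; simp only; rw [(hcnt n).2]; field_simp
    rw [this] at h1n
    linarith

/-- For a 0/1-valued sequence, the partial sum counts the non-zeros. -/
lemma sum01 {r : ℕ → ℝ} (h01 : ∀ t, r t = 0 ∨ r t = 1) (T : ℕ) :
    ∑ t ∈ Finset.range T, r t
      = (T : ℝ) - ((Finset.range T).filter (fun t => r t = 0)).card := by
  classical
  have h1 : ∑ t ∈ (Finset.range T).filter (fun t => ¬ r t = 0), r t
      = ∑ t ∈ Finset.range T, r t :=
    Finset.sum_filter_of_ne (fun t _ h => h)
  have h2 : ∑ t ∈ (Finset.range T).filter (fun t => ¬ r t = 0), r t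
      = (((Finset.range T).filter (fun t => ¬ r t = 0)).card : ℝ) := by
    have hall : ∀ t ∈ (Finset.range T).filter (fun t => ¬ r t = 0), r t = 1 := by
      intro t ht
      rcases h01 t with h | h
      · exact absurd h (Finset.mem_filter.1 ht).2
      · exact h
    rw [Finset.sum_congr rfl hall]
    simp
  have h3 := Finset.card_filter_add_card_filter_not
    (s := Finset.range T) (p := fun t => r t = 0)
  rw [Finset.card_range] at h3
  rw [← h1, h2]
  have : (((Finset.range T).filter (fun t => ¬ r t = 0)).card : ℝ)
      = (T : ℝ) - ((Finset.range T).filter (fun t => r t = 0)).card := by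
    have h4 : ((Finset.range T).filter (fun t => r t = 0)).card
        + ((Finset.range T).filter (fun t => ¬ r t = 0)).card = T := by
      simpa using h3
    have := congrArg (fun q : ℕ => (q : ℝ)) h4
    push_cast at this
    linarith
  rw [this]

end LiminfAvg

/-! ## Deterministic plays of pure profiles -/

section PureDet

variable {P S A : Type} [Fintype P] [Nonempty P] [Fintype S] [Nonempty S]
  [Fintype A] [Nonempty A] [DecidableEq P]

namespace ConcurrentGame

variable {G : ConcurrentGame P S A}

lemma Strategy.prob_eq_zero_of_ne {i : P} (σ : G.Strategy i) {x : Hist P S A} {s : S} {a b : A}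
    (h1 : σ.prob x s a = 1) (hb : b ≠ a) : σ.prob x s b = 0 := by
  classical
  have hsum := σ.sum_one x s
  rw [← Finset.add_sum_erase _ _ (Finset.mem_univ a), h1] at hsum
  have hz : ∑ c ∈ Finset.univ.erase a, σ.prob x s c = 0 := by linarith
  exact (Finset.sum_eq_zero_iff_of_nonneg (fun c _ => σ.nonneg x s c)).1 hz b
    (Finset.mem_erase.2 ⟨hb, Finset.mem_univ b⟩)

lemma Strategy.prob_forced {i : P} (σ : G.Strategy i) {s : S} {a : A}
    (hact : G.act i s = {a}) (x : Hist P S A) : σ.prob x s a = 1 := by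
  have hsum := σ.sum_one x s
  have hz : ∀ b, b ≠ a → σ.prob x s b = 0 := by
    intro b hb
    by_contra h
    have := σ.supp x s b h
    rw [hact] at this
    exact hb this
  rwa [Finset.sum_eq_single a (fun b _ hb => hz b hb) (fun h => absurd (Finset.mem_univ a) h)]
    at hsum

/-- The action chosen (with probability 1) by a pure strategy. -/
def Strategy.pureAct {i : P} (σ : G.Strategy i) (h : σ.IsPure) (x : Hist P S A) (s : S) : A :=
  Classical.choose (h x s)

lemma Strategy.pureAct_prob {i : P} (σ : G.Strategy i) (h : σ.IsPure) (x : Hist P S A) (s : S) :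
    σ.prob x s (σ.pureAct h x s) = 1 :=
  Classical.choose_spec (h x s)

lemma Strategy.pureAct_mem {i : P} (σ : G.Strategy i) (h : σ.IsPure) (x : Hist P S A) (s : S) :
    σ.pureAct h x s ∈ G.act i s :=
  σ.supp x s _ (by rw [σ.pureAct_prob h x s]; norm_num)

lemma Strategy.pureAct_eq_of_prob_one {i : P} (σ : G.Strategy i) (h : σ.IsPure)
    {x : Hist P S A} {s : S} {a : A} (ha : σ.prob x s a = 1) : σ.pureAct h x s = a := by
  by_contra hne
  have := σ.prob_eq_zero_of_ne ha hne
  rw [σ.pureAct_prob h x s] at this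
  norm_num at this

lemma Strategy.pureAct_forced {i : P} (σ : G.Strategy i) (h : σ.IsPure)
    {s : S} {a : A} (hact : G.act i s = {a}) (x : Hist P S A) : σ.pureAct h x s = a :=
  σ.pureAct_eq_of_prob_one h (σ.prob_forced hact x)

/-- The action profile chosen by a pure strategy profile. -/
def pureProf (σ : Profile G) (hσ : IsPureProfile σ) (x : Hist P S A) (s : S) : P → A :=
  fun i => (σ i).pureAct (hσ i) x s

lemma weight_sum (σ : Profile G) (x : Hist P S A) (s : S) : ∑ b, G.weight σ x s b = 1 := by
  classical
  unfold weight
  rw [show (Finset.univ : Finset (P → A)) = Fintype.piFinset (fun _ : P => (Finset.univ : Finset A)) from (Fintype.piFinset_univ).symm, ← Finset.prod_univ_sum]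
  rw [Finset.prod_congr rfl (fun i _ => (σ i).sum_one x s)]
  simp

lemma pick_weight_eq (σ : Profile G) {x : Hist P S A} {s : S} (a : P → A)
    (ha : ∀ i, (σ i).prob x s (a i) = 1) {u : ℝ} (hu0 : 0 ≤ u) (hu1 : u < 1) :
    pick (G.weight σ x s) u = a := by
  have hnn : ∀ b, 0 ≤ G.weight σ x s b := fun b =>
    Finset.prod_nonneg fun i _ => (σ i).nonneg x s (b i)
  have hpos := pick_pos (G.weight σ x s) hnn (weight_sum σ x s) hu0 hu1
  set b := pick (G.weight σ x s) u with hb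
  funext i
  by_contra hne
  have : (σ i).prob x s (b i) = 0 := (σ i).prob_eq_zero_of_ne (ha i) hne
  have : G.weight σ x s b = 0 := by
    unfold weight
    exact Finset.prod_eq_zero (Finset.mem_univ i) this
  rw [this] at hpos
  norm_num at hpos

/-- The deterministic history-and-state sequence generated by a pure profile. -/
def detH (σ : Profile G) (hσ : IsPureProfile σ) (s₀ : S) : ℕ → Hist P S A × S
  | 0 => ([], s₀)
  | n + 1 =>
    let h := detH σ hσ s₀ n
    (h.1 ++ [(h.2, pureProf σ hσ h.1 h.2)], G.tr h.2 (pureProf σ hσ h.1 h.2))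

/-- The deterministic state sequence generated by a pure profile. -/
def detState (σ : Profile G) (hσ : IsPureProfile σ) (s₀ : S) (n : ℕ) : S :=
  (detH σ hσ s₀ n).2

lemma detState_succ (σ : Profile G) (hσ : IsPureProfile σ) (s₀ : S) (n : ℕ) :
    detState σ hσ s₀ (n + 1)
      = G.tr (detState σ hσ s₀ n)
          (pureProf σ hσ (detH σ hσ s₀ n).1 (detH σ hσ s₀ n).2) := rfl

lemma histOf_append (s₀ : S) (l : List (P → A)) (a : P → A) :
    G.histOf s₀ (l ++ [a])
      = ((G.histOf s₀ l).1 ++ [((G.histOf s₀ l).2, a)], G.tr (G.histOf s₀ l).2 a) := by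
  induction l generalizing s₀ with
  | nil => simp [histOf]
  | cons b l ih => simp [histOf, ih]

/-- If `σ'` assigns probability one along the deterministic play of the pure profile `σ`
to the same actions, then running `σ'` produces exactly that play, whatever the randomness. -/
lemma histOf_samplePrefix_eq (σ' σ : Profile G) (hσ : IsPureProfile σ) (s₀ : S)
    (hmatch : ∀ n i, (σ' i).prob (detH σ hσ s₀ n).1 (detH σ hσ s₀ n).2
        (pureProf σ hσ (detH σ hσ s₀ n).1 (detH σ hσ s₀ n).2 i) = 1)
    (u : USpace) : ∀ n, G.histOf s₀ (G.samplePrefix σ' s₀ u n) = detH σ hσ s₀ n := by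
  intro n
  induction n with
  | zero => rfl
  | succ n ih =>
    have hstep : G.samplePrefix σ' s₀ u (n+1)
        = G.samplePrefix σ' s₀ u n
          ++ [pick (G.weight σ' (G.histOf s₀ (G.samplePrefix σ' s₀ u n)).1
                (G.histOf s₀ (G.samplePrefix σ' s₀ u n)).2) (coordReal u n)] := rfl
    show G.histOf s₀ (G.samplePrefix σ' s₀ u (n+1)) = _
    rw [hstep, histOf_append, ih]
    have hpick : pick (G.weight σ' (detH σ hσ s₀ n).1 (detH σ hσ s₀ n).2) (coordReal u n)
        = pureProf σ hσ (detH σ hσ s₀ n).1 (detH σ hσ s₀ n).2 :=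
      pick_weight_eq σ' _ (hmatch n) (coordReal_mem u n).1 (coordReal_mem u n).2
    rw [hpick]
    rfl

lemma stateAt_eq_detState (σ' σ : Profile G) (hσ : IsPureProfile σ) (s₀ : S)
    (hmatch : ∀ n i, (σ' i).prob (detH σ hσ s₀ n).1 (detH σ hσ s₀ n).2
        (pureProf σ hσ (detH σ hσ s₀ n).1 (detH σ hσ s₀ n).2 i) = 1)
    (u : USpace) (n : ℕ) : G.stateAt σ' s₀ u n = detState σ hσ s₀ n := by
  unfold stateAt detState
  rw [histOf_samplePrefix_eq σ' σ hσ s₀ hmatch u n]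

lemma expPay_eq_det (σ' σ : Profile G) (hσ : IsPureProfile σ) (s₀ : S)
    (hmatch : ∀ n i, (σ' i).prob (detH σ hσ s₀ n).1 (detH σ hσ s₀ n).2
        (pureProf σ hσ (detH σ hσ s₀ n).1 (detH σ hσ s₀ n).2 i) = 1)
    (i : P) : G.expPay σ' s₀ i = G.payOf i (detState σ hσ s₀) := by
  unfold expPay
  have h1 : ∀ u : USpace, G.payOf i (G.stateAt σ' s₀ u) = G.payOf i (detState σ hσ s₀) := by
    intro u
    congr 1
    funext n
    exact stateAt_eq_detState σ' σ hσ s₀ hmatch u n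
  rw [MeasureTheory.integral_congr_ae (Filter.Eventually.of_forall h1)]
  rw [MeasureTheory.integral_const]
  simp

lemma stateAt_pure (σ : Profile G) (hσ : IsPureProfile σ) (s₀ : S) (u : USpace) (n : ℕ) :
    G.stateAt σ s₀ u n = detState σ hσ s₀ n :=
  stateAt_eq_detState σ σ hσ s₀ (fun n i => (σ i).pureAct_prob (hσ i) _ _) u n

lemma expPay_pure (σ : Profile G) (hσ : IsPureProfile σ) (s₀ : S) (i : P) :
    G.expPay σ s₀ i = G.payOf i (detState σ hσ s₀) :=
  expPay_eq_det σ σ hσ s₀ (fun n i => (σ i).pureAct_prob (hσ i) _ _) i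

/-- The positional strategy that plays `f s` at state `s`. -/
def posStrat (G : ConcurrentGame P S A) (i : P) (f : S → A) (hf : ∀ s, f s ∈ G.act i s) :
    G.Strategy i :=
  letI := Classical.decEq A
  { prob := fun _ s a => if a = f s then 1 else 0
    nonneg := fun _ s a => by by_cases h : a = f s <;> simp [h]
    sum_one := fun x s => by simp
    supp := fun x s a h => by
      have ha : a = f s := by
        by_contra h2
        simp [h2] at h
      exact ha ▸ hf s }

lemma posStrat_prob (G : ConcurrentGame P S A) (i : P) (f : S → A) (hf : ∀ s, f s ∈ G.act i s)
    (x : Hist P S A) (s : S) : (posStrat G i f hf).prob x s (f s) = 1 := by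
  simp [posStrat]

lemma posStrat_pure (G : ConcurrentGame P S A) (i : P) (f : S → A) (hf : ∀ s, f s ∈ G.act i s) :
    (posStrat G i f hf).IsPure := fun x s => ⟨f s, posStrat_prob G i f hf x s⟩

lemma posStrat_pureAct (G : ConcurrentGame P S A) (i : P) (f : S → A) (hf : ∀ s, f s ∈ G.act i s)
    (h : (posStrat G i f hf).IsPure) (x : Hist P S A) (s : S) :
    (posStrat G i f hf).pureAct h x s = f s :=
  (posStrat G i f hf).pureAct_eq_of_prob_one h (posStrat_prob G i f hf x s)

lemma payOf_le_one (i : P) (ss : ℕ → S) (h0 : ∀ s, 0 ≤ G.rew i s) (h1 : ∀ s, G.rew i s ≤ 1) :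
    G.payOf i ss ≤ 1 :=
  liminf_avg_le_one (fun t => h0 (ss t)) (fun t => h1 (ss t))

lemma expPay_le_one (σ' : Profile G) (s₀ : S) (i : P)
    (h0 : ∀ s, 0 ≤ G.rew i s) (h1 : ∀ s, G.rew i s ≤ 1) : G.expPay σ' s₀ i ≤ 1 := by
  unfold expPay
  by_cases hI : MeasureTheory.Integrable (fun u => G.payOf i (G.stateAt σ' s₀ u)) uHaar
  · calc ∫ u, G.payOf i (G.stateAt σ' s₀ u) ∂uHaar
        ≤ ∫ _u, (1:ℝ) ∂uHaar :=
          MeasureTheory.integral_mono hI (MeasureTheory.integrable_const 1)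
            (fun u => payOf_le_one i _ h0 h1)
      _ = 1 := by rw [MeasureTheory.integral_const]; simp
  · rw [MeasureTheory.integral_undef hI]
    norm_num

end ConcurrentGame

end PureDet


/-! ## Properties of the SAT game -/

section SatGameFacts

open ConcurrentGame

variable {n m : ℕ} (hm : 0 < m) (φ : Fin m → Finset (Lit n)) (hφ : ∀ j, (φ j).Nonempty)

lemma satRew_nonneg (i : Fin (n+1)) (s : SatState n m) : 0 ≤ (satGame n m hm φ hφ).rew i s := by
  show (0:ℝ) ≤ if i = 0 then _ else _
  rcases s with j | ⟨j, b, v⟩ | u <;> split_ifs <;> simp <;> split_ifs <;> norm_num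

lemma satRew_le_one (i : Fin (n+1)) (s : SatState n m) : (satGame n m hm φ hφ).rew i s ≤ 1 := by
  show (if i = 0 then _ else _) ≤ (1:ℝ)
  rcases s with j | ⟨j, b, v⟩ | u <;> split_ifs <;> simp <;> split_ifs <;> norm_num

/-- The equilibrium action: player 0 selects the designated literal, everyone else moves on. -/
def eqAct {n m : ℕ} (Lsel : Fin m → Lit n) (i : Fin (n + 1)) (s : SatState n m) : SatAct n :=
  match s with
  | .inl j => if i = 0 then Sum.inl (Lsel j) else Sum.inr false
  | _ => Sum.inr false

/-- The (positional, pure) equilibrium strategy built from a selection of literals. -/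
def eqStrat (n m : ℕ) (hm : 0 < m) (φ : Fin m → Finset (Lit n)) (hφ : ∀ j, (φ j).Nonempty)
    (Lsel : Fin m → Lit n) (hLsel : ∀ j, Lsel j ∈ φ j) (i : Fin (n + 1)) :
    (satGame n m hm φ hφ).Strategy i where
  prob _ s a := if a = eqAct Lsel i s then 1 else 0
  nonneg _ s a := by by_cases h : a = eqAct Lsel i s <;> simp [h]
  sum_one x s := by simp
  supp x s a h := by
    have ha : a = eqAct Lsel i s := by
      by_contra h2
      simp [h2] at h
    subst ha
    rcases s with j | ⟨j, b, v⟩ | u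
    · show eqAct Lsel i (.inl j)
        ∈ (if i = 0 then Sum.inl '' (φ j : Set (Lit n)) else {Sum.inr false})
      by_cases h0 : i = 0
      · simp only [eqAct, h0, if_true]
        exact ⟨Lsel j, hLsel j, rfl⟩
      · simp [eqAct, h0]
    · show eqAct Lsel i (.inr (.inl (j, (b, v))))
        ∈ (if i = Fin.succ v ∧ b = false then ({Sum.inr false, Sum.inr true} : Set (SatAct n))
            else {Sum.inr false})
      split <;> simp [eqAct]
    · show eqAct Lsel i (.inr (.inr u)) ∈ ({Sum.inr false} : Set (SatAct n))
      simp [eqAct]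

lemma satAct_clause_zero (j : Fin m) :
    (satGame n m hm φ hφ).act 0 (.inl j) = Sum.inl '' (φ j : Set (Lit n)) := by
  simp [satGame]

lemma satAct_clause_succ (v : Fin n) (j : Fin m) :
    (satGame n m hm φ hφ).act v.succ (.inl j) = {Sum.inr false} := by
  simp [satGame, (Fin.succ_ne_zero v)]

lemma satAct_lit (i : Fin (n+1)) (j : Fin m) (b : Bool) (w : Fin n) :
    (satGame n m hm φ hφ).act i (.inr (.inl (j, (b, w))))
      = if i = Fin.succ w ∧ b = false then ({Sum.inr false, Sum.inr true} : Set (SatAct n))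
        else {Sum.inr false} := rfl

lemma satAct_bot (i : Fin (n+1)) (u : Unit) :
    (satGame n m hm φ hφ).act i (.inr (.inr u)) = {Sum.inr false} := rfl

lemma satTr_clause {a : Fin (n+1) → SatAct n} (j : Fin m) {L : Lit n} (h : a 0 = Sum.inl L) :
    (satGame n m hm φ hφ).tr (.inl j) a = .inr (.inl (j, L)) := by
  show (match a 0 with
    | .inl L => (Sum.inr (Sum.inl (j, L)) : SatState n m)
    | .inr _ => .inl j) = _
  rw [h]

lemma satTr_lit_cont {a : Fin (n+1) → SatAct n} (j : Fin m) (b : Bool) (w : Fin n)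
    (h : ¬(b = false ∧ a (Fin.succ w) = Sum.inr true)) :
    (satGame n m hm φ hφ).tr (.inr (.inl (j, (b, w)))) a
      = .inl ⟨(j.val + 1) % m, Nat.mod_lt _ hm⟩ := by
  show (if b = false ∧ a (Fin.succ w) = Sum.inr true then (.inr (.inr ()) : SatState n m)
      else .inl ⟨(j.val + 1) % m, Nat.mod_lt _ hm⟩) = _
  rw [if_neg h]

lemma satTr_lit_quit {a : Fin (n+1) → SatAct n} (j : Fin m) (w : Fin n)
    (h : a (Fin.succ w) = Sum.inr true) :
    (satGame n m hm φ hφ).tr (.inr (.inl (j, (false, w)))) a = .inr (.inr ()) := by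
  show (if false = false ∧ a (Fin.succ w) = Sum.inr true then (.inr (.inr ()) : SatState n m)
      else .inl ⟨(j.val + 1) % m, Nat.mod_lt _ hm⟩) = _
  rw [if_pos ⟨rfl, h⟩]

lemma satTr_bot (a : Fin (n+1) → SatAct n) (u : Unit) :
    (satGame n m hm φ hφ).tr (.inr (.inr u)) a = .inr (.inr u) := rfl

lemma satRew_zero_clause (j : Fin m) : (satGame n m hm φ hφ).rew 0 (.inl j) = 1 := rfl

lemma satRew_zero_lit (j : Fin m) (L : Lit n) :
    (satGame n m hm φ hφ).rew 0 (.inr (.inl (j, L))) = 1 := rfl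

lemma satRew_zero_bot (u : Unit) : (satGame n m hm φ hφ).rew 0 (.inr (.inr u)) = 0 := rfl

lemma satRew_succ_clause (v : Fin n) (j : Fin m) :
    (satGame n m hm φ hφ).rew v.succ (.inl j) = 1 := by
  simp [satGame, Fin.succ_ne_zero]

lemma satRew_succ_bot (v : Fin n) (u : Unit) :
    (satGame n m hm φ hφ).rew v.succ (.inr (.inr u)) = 1 := by
  simp [satGame, Fin.succ_ne_zero]

lemma satRew_succ_lit (v : Fin n) (j : Fin m) (b : Bool) (w : Fin n) :
    (satGame n m hm φ hφ).rew v.succ (.inr (.inl (j, (b, w))))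
      = if b = true ∧ Fin.succ w = Fin.succ v then 0 else 1 := by
  simp [satGame, Fin.succ_ne_zero]

lemma satRew_01 (i : Fin (n+1)) (s : SatState n m) :
    (satGame n m hm φ hφ).rew i s = 0 ∨ (satGame n m hm φ hφ).rew i s = 1 := by
  show (if i = 0 then _ else _) = 0 ∨ (if i = 0 then _ else _) = 1
  rcases s with j | ⟨j, b, v⟩ | u <;> split_ifs <;> simp <;> tauto

end SatGameFacts

/-! ## The forward direction -/

section Forward

open ConcurrentGame Filter

lemma forward_dir (n m : ℕ) (hm : 0 < m) (φ : Fin m → Finset (Lit n)) (hφ : ∀ j, (φ j).Nonempty)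
    (hsat : SatSatisfiable n m φ) :
    ∃ σ : Profile (satGame n m hm φ hφ), ConcurrentGame.IsPureProfile σ ∧
      (satGame n m hm φ hφ).IsNash σ (Sum.inl ⟨0, hm⟩) ∧
      1 ≤ (satGame n m hm φ hφ).expPay σ (Sum.inl ⟨0, hm⟩) 0 := by
  obtain ⟨α, hα⟩ := hsat
  have hLex : ∀ j : Fin m, ∃ L, L ∈ φ j ∧ α L.2 = L.1 := by
    intro j; obtain ⟨L, hL1, hL2⟩ := hα j; exact ⟨L, hL1, hL2⟩
  set Lsel : Fin m → Lit n := fun j => Classical.choose (hLex j) with hLsel_def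
  have hLmem : ∀ j, Lsel j ∈ φ j := fun j => (Classical.choose_spec (hLex j)).1
  have hLtrue : ∀ j, α (Lsel j).2 = (Lsel j).1 := fun j => (Classical.choose_spec (hLex j)).2
  set G := satGame n m hm φ hφ with hG
  set σ : Profile G := fun i => eqStrat n m hm φ hφ Lsel hLmem i with hσdef
  have hσ : IsPureProfile σ := fun i x s => ⟨eqAct Lsel i s, if_pos rfl⟩
  set s₀ : SatState n m := Sum.inl ⟨0, hm⟩ with hs₀
  have hprof : ∀ x s, pureProf σ hσ x s = fun i => eqAct Lsel i s := by
    intro x s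
    funext i
    exact (σ i).pureAct_eq_of_prob_one (hσ i) (if_pos rfl)
  set π : ℕ → SatState n m := detState σ hσ s₀ with hπdef
  have hstep : ∀ t, π (t+1) = G.tr (π t) (fun i => eqAct Lsel i (π t)) := by
    intro t
    show detState σ hσ s₀ (t+1) = _
    rw [detState_succ, hprof]
    rfl
  have jlt : ∀ k : ℕ, k % m < m := fun k => Nat.mod_lt _ hm
  have ha0 : ∀ s, eqAct Lsel (0 : Fin (n+1)) s = (match s with
      | .inl j => Sum.inl (Lsel j) | _ => Sum.inr false) := by
    intro s
    rcases s with j | l | u <;> simp [eqAct]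
  have hplay : ∀ k : ℕ, π (2*k) = Sum.inl ⟨k % m, jlt k⟩ ∧
      π (2*k+1) = Sum.inr (Sum.inl (⟨k % m, jlt k⟩, Lsel ⟨k % m, jlt k⟩)) := by
    intro k
    have hclause : ∀ t (j : Fin m), π t = Sum.inl j → π (t+1) = Sum.inr (Sum.inl (j, Lsel j)) := by
      intro t j hj
      rw [hstep, hj]
      exact satTr_clause hm φ hφ j (by rw [ha0])
    have hlit : ∀ t (j : Fin m) (L : Lit n), π t = Sum.inr (Sum.inl (j, L)) →
        π (t+1) = Sum.inl ⟨(j.val + 1) % m, Nat.mod_lt _ hm⟩ := by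
      intro t j L hj
      rw [hstep, hj]
      obtain ⟨b, w⟩ := L
      refine satTr_lit_cont hm φ hφ j b w ?_
      rintro ⟨-, hcon⟩
      simp [eqAct] at hcon
    induction k with
    | zero =>
      have h0 : π (2*0) = Sum.inl ⟨0 % m, jlt 0⟩ := by
        show π 0 = _
        show s₀ = _
        rw [hs₀]
        exact congrArg Sum.inl (Fin.ext (by simp))
      exact ⟨h0, hclause (2*0) _ h0⟩
    | succ k ih =>
      have e1 : 2*(k+1) = (2*k+1)+1 := by ring
      have h1 : π (2*(k+1)) = Sum.inl ⟨(k+1) % m, jlt (k+1)⟩ := by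
        rw [e1, hlit (2*k+1) _ _ ih.2]
        congr 1
        refine Fin.ext ?_
        show (k % m + 1) % m = (k+1) % m
        conv_rhs => rw [Nat.add_mod]
        conv_lhs => rw [Nat.add_mod]
        rw [Nat.mod_mod_of_dvd k (dvd_refl m)]
      exact ⟨h1, hclause (2*(k+1)) _ h1⟩
  have hshape : ∀ t : ℕ, (∃ k, t = 2*k) ∨ (∃ k, t = 2*k+1) := by
    intro t
    rcases Nat.even_or_odd t with ⟨k, hk⟩ | ⟨k, hk⟩
    · exact Or.inl ⟨k, by omega⟩
    · exact Or.inr ⟨k, by omega⟩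
  -- player 0's payoff is 1
  have hr0 : ∀ t, G.rew 0 (π t) = 1 := by
    intro t
    rcases hshape t with ⟨k, rfl⟩ | ⟨k, rfl⟩
    · rw [(hplay k).1]; exact satRew_zero_clause hm φ hφ _
    · rw [(hplay k).2]; exact satRew_zero_lit hm φ hφ _ _
  have hpay0 : 1 ≤ G.payOf 0 π :=
    liminf_avg_ge_one (fun t => satRew_nonneg hm φ hφ 0 (π t))
      (fun t => satRew_le_one hm φ hφ 0 (π t)) 0 (fun t _ => hr0 t)
  have hexp : ∀ i, G.expPay σ s₀ i = G.payOf i π := fun i => expPay_pure σ hσ s₀ i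
  refine ⟨σ, hσ, ?_, ?_⟩
  · -- Nash
    intro i τ
    by_cases hi : i = 0
    · subst hi
      calc G.expPay (Function.update σ 0 τ) s₀ 0 ≤ 1 :=
            expPay_le_one _ s₀ 0 (fun s => satRew_nonneg hm φ hφ 0 s)
              (fun s => satRew_le_one hm φ hφ 0 s)
        _ ≤ G.payOf 0 π := hpay0
        _ = G.expPay σ s₀ 0 := (hexp 0).symm
    · obtain ⟨v, rfl⟩ := Fin.eq_succ_of_ne_zero hi
      by_cases hv : α v = true
      · -- the deviation cannot change the play
        have hforced : ∀ k, G.act v.succ ((detH σ hσ s₀ k).2) = {Sum.inr false} := by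
          intro k
          rcases hshape k with ⟨k', rfl⟩ | ⟨k', rfl⟩
          · rw [show (detH σ hσ s₀ (2*k')).2 = π (2*k') from rfl, (hplay k').1]
            exact satAct_clause_succ hm φ hφ v _
          · rw [show (detH σ hσ s₀ (2*k'+1)).2 = π (2*k'+1) from rfl, (hplay k').2]
            rcases hLL : Lsel ⟨k' % m, jlt k'⟩ with ⟨b, w⟩
            rw [satAct_lit, if_neg]
            rintro ⟨h1, h2⟩
            obtain rfl : v = w := Fin.succ_inj.mp h1
            have hT := hLtrue ⟨k' % m, jlt k'⟩
            rw [hLL] at hT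
            rw [hv, h2] at hT
            simp at hT
        have hmatch : ∀ k i', (Function.update σ v.succ τ i').prob (detH σ hσ s₀ k).1
            (detH σ hσ s₀ k).2 (pureProf σ hσ (detH σ hσ s₀ k).1 (detH σ hσ s₀ k).2 i') = 1 := by
          intro k i'
          by_cases hii : i' = v.succ
          · subst hii
            rw [Function.update_self]
            have hfa : pureProf σ hσ (detH σ hσ s₀ k).1 (detH σ hσ s₀ k).2 v.succ
                = Sum.inr false := by
              have hmem := (σ v.succ).pureAct_mem (hσ v.succ) (detH σ hσ s₀ k).1
                (detH σ hσ s₀ k).2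
              rw [hforced k] at hmem
              exact hmem
            rw [hfa]
            exact τ.prob_forced (hforced k) _
          · rw [Function.update_of_ne hii, hprof]
            show (if eqAct Lsel i' (detH σ hσ s₀ k).2 = eqAct Lsel i' (detH σ hσ s₀ k).2
                then (1:ℝ) else 0) = 1
            rw [if_pos rfl]
        refine le_of_eq ?_
        calc G.expPay (Function.update σ v.succ τ) s₀ v.succ
            = G.payOf v.succ (detState σ hσ s₀) :=
              expPay_eq_det (Function.update σ v.succ τ) σ hσ s₀ hmatch v.succ
          _ = G.expPay σ s₀ v.succ := (hexp v.succ).symm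
      · have hvf : α v = false := by revert hv; cases α v <;> simp
        have hr : ∀ t, G.rew v.succ (π t) = 1 := by
          intro t
          rcases hshape t with ⟨k, rfl⟩ | ⟨k, rfl⟩
          · rw [(hplay k).1]; exact satRew_succ_clause hm φ hφ v _
          · rw [(hplay k).2]
            rcases hLL : Lsel ⟨k % m, jlt k⟩ with ⟨b, w⟩
            rw [satRew_succ_lit, if_neg]
            rintro ⟨h1, h2⟩
            obtain rfl : w = v := Fin.succ_inj.mp h2
            have hT := hLtrue ⟨k % m, jlt k⟩
            rw [hLL] at hT
            rw [hvf, h1] at hT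
            simp at hT
        have hpv : 1 ≤ G.payOf v.succ π :=
          liminf_avg_ge_one (fun t => satRew_nonneg hm φ hφ _ (π t))
            (fun t => satRew_le_one hm φ hφ _ (π t)) 0 (fun t _ => hr t)
        calc G.expPay (Function.update σ v.succ τ) s₀ v.succ ≤ 1 :=
              expPay_le_one _ s₀ _ (fun s => satRew_nonneg hm φ hφ _ s)
                (fun s => satRew_le_one hm φ hφ _ s)
          _ ≤ G.payOf v.succ π := hpv
          _ = G.expPay σ s₀ v.succ := (hexp _).symm
  · rw [hexp 0]
    exact hpay0

end Forward


/-! ## The backward direction -/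

section Backward

open ConcurrentGame Filter

lemma backward_dir (n m : ℕ) (hm : 0 < m) (φ : Fin m → Finset (Lit n)) (hφ : ∀ j, (φ j).Nonempty)
    (σ : Profile (satGame n m hm φ hφ)) (hσ : ConcurrentGame.IsPureProfile σ)
    (hnash : (satGame n m hm φ hφ).IsNash σ (Sum.inl ⟨0, hm⟩))
    (hpay : 1 ≤ (satGame n m hm φ hφ).expPay σ (Sum.inl ⟨0, hm⟩) 0) :
    SatSatisfiable n m φ := by
  classical
  revert hnash hpay
  revert hσ
  revert σ
  set G := satGame n m hm φ hφ with hG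
  intro σ hσ hnash hpay
  set s₀ : SatState n m := Sum.inl ⟨0, hm⟩ with hs₀
  set π : ℕ → SatState n m := detState σ hσ s₀ with hπdef
  have hstep : ∀ t, π (t+1)
      = G.tr (π t) (pureProf σ hσ (detH σ hσ s₀ t).1 (detH σ hσ s₀ t).2) := by
    intro t
    exact detState_succ σ hσ s₀ t
  have haleg : ∀ t i, pureProf σ hσ (detH σ hσ s₀ t).1 (detH σ hσ s₀ t).2 i ∈ G.act i (π t) :=
    fun t i => (σ i).pureAct_mem (hσ i) _ _
  have h0pay : 1 ≤ G.payOf 0 π := by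
    rw [← expPay_pure σ hσ s₀ 0]
    exact hpay
  -- Step A: the play never reaches ⊥
  have hnobot : ∀ t, π t ≠ Sum.inr (Sum.inr ()) := by
    intro N hN
    have habs : ∀ t, N ≤ t → π t = Sum.inr (Sum.inr ()) := by
      intro t ht
      induction t with
      | zero =>
        have hN0 : N = 0 := Nat.le_zero.mp ht
        rwa [← hN0]
      | succ t iht =>
        rcases Nat.lt_or_ge N (t+1) with h | h
        · have hh := iht (by omega)
          rw [hstep, hh]
          exact satTr_bot hm φ hφ _ ()
        · have : N = t+1 := by omega
          rwa [← this]
    have hle : G.payOf 0 π ≤ 0 :=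
      liminf_avg_le_zero (fun t => satRew_nonneg hm φ hφ 0 (π t))
        (fun t => satRew_le_one hm φ hφ 0 (π t)) N
        (fun t ht => by rw [habs t ht]; exact satRew_zero_bot hm φ hφ ())
    linarith
  have jlt : ∀ k : ℕ, k % m < m := fun k => Nat.mod_lt _ hm
  -- Step B: the shape of the play
  have hclause : ∀ t (j : Fin m), π t = Sum.inl j →
      ∃ L ∈ φ j, π (t+1) = Sum.inr (Sum.inl (j, L)) := by
    intro t j hj
    have hmem := haleg t 0
    rw [hj, satAct_clause_zero] at hmem
    obtain ⟨L, hL, hLe⟩ := hmem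
    refine ⟨L, hL, ?_⟩
    rw [hstep, hj]
    exact satTr_clause hm φ hφ j hLe.symm
  have hlit : ∀ t (j : Fin m) (L : Lit n), π t = Sum.inr (Sum.inl (j, L)) →
      π (t+1) = Sum.inl ⟨(j.val + 1) % m, Nat.mod_lt _ hm⟩ := by
    intro t j L hj
    rcases L with ⟨b, w⟩
    rw [hstep, hj]
    refine satTr_lit_cont hm φ hφ j b w ?_
    rintro ⟨hb, hq⟩
    apply hnobot (t+1)
    subst hb
    rw [hstep, hj]
    exact satTr_lit_quit hm φ hφ j w hq
  have hplay : ∀ k : ℕ, π (2*k) = Sum.inl ⟨k % m, jlt k⟩ ∧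
      ∃ L ∈ φ (⟨k % m, jlt k⟩ : Fin m), π (2*k+1) = Sum.inr (Sum.inl (⟨k % m, jlt k⟩, L)) := by
    intro k
    induction k with
    | zero =>
      have h0 : π (2*0) = Sum.inl ⟨0 % m, jlt 0⟩ := by
        show s₀ = _
        rw [hs₀]
        exact congrArg Sum.inl (Fin.ext (by simp))
      exact ⟨h0, hclause (2*0) _ h0⟩
    | succ k ih =>
      obtain ⟨L, hL, hπL⟩ := ih.2
      have e1 : 2*(k+1) = (2*k+1)+1 := by ring
      have h1 : π (2*(k+1)) = Sum.inl ⟨(k+1) % m, jlt (k+1)⟩ := by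
        rw [e1, hlit (2*k+1) _ _ hπL]
        refine congrArg Sum.inl (Fin.ext ?_)
        show (k % m + 1) % m = (k+1) % m
        conv_rhs => rw [Nat.add_mod]
        conv_lhs => rw [Nat.add_mod]
        rw [Nat.mod_mod_of_dvd k (dvd_refl m)]
      exact ⟨h1, hclause (2*(k+1)) _ h1⟩
  -- the literal chosen at stage k
  set Lch : ℕ → Lit n := fun k => Classical.choose (hplay k).2 with hLch
  have hLch_mem : ∀ k, Lch k ∈ φ (⟨k % m, jlt k⟩ : Fin m) :=
    fun k => (Classical.choose_spec (hplay k).2).1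
  have hLch_eq : ∀ k, π (2*k+1) = Sum.inr (Sum.inl (⟨k % m, jlt k⟩, Lch k)) :=
    fun k => (Classical.choose_spec (hplay k).2).2
  have hshape : ∀ t : ℕ, (∃ k, t = 2*k) ∨ (∃ k, t = 2*k+1) := by
    intro t
    rcases Nat.even_or_odd t with ⟨k, hk⟩ | ⟨k, hk⟩
    · exact Or.inl ⟨k, by omega⟩
    · exact Or.inr ⟨k, by omega⟩
  -- Step C: if a negative literal of v is ever visited, player v.succ's payoff is at least 1
  have hkey : ∀ v : Fin n, (∃ k, Lch k = (false, v)) → 1 ≤ G.payOf v.succ π := by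
    intro v ⟨k₀, hk₀⟩
    -- the quitting deviation
    set qact : SatState n m → SatAct n := fun s => match s with
      | .inr (.inl (_, (false, w))) =>
          if v.succ = Fin.succ w then Sum.inr true else Sum.inr false
      | _ => Sum.inr false with hqact
    have hqmem : ∀ s, qact s ∈ G.act v.succ s := by
      intro s
      rcases s with j | ⟨j, b, w⟩ | u
      · rw [satAct_clause_succ]
        simp [hqact]
      · rw [satAct_lit]
        rcases b with _ | _
        · by_cases hvw : v.succ = Fin.succ w
          · rw [if_pos ⟨hvw, rfl⟩]
            simp [hqact, hvw]
          · rw [if_neg (by rintro ⟨h1, -⟩; exact hvw h1)]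
            show qact (Sum.inr (Sum.inl (j, (false, w)))) ∈ ({Sum.inr false} : Set (SatAct n))
            simp only [hqact]
            rw [if_neg hvw]
            simp
        · rw [if_neg (by rintro ⟨-, h2⟩; exact Bool.noConfusion h2)]
          simp [hqact]
      · rw [satAct_bot]
        simp [hqact]
    set τ : G.Strategy v.succ := posStrat G v.succ qact hqmem with hτ
    set σ' : Profile G := Function.update σ v.succ τ with hσ'def
    have hσ' : IsPureProfile σ' := by
      intro i
      by_cases hii : i = v.succ
      · subst hii
        rw [hσ'def, Function.update_self]
        exact posStrat_pure G v.succ qact hqmem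
      · rw [hσ'def, Function.update_of_ne hii]
        exact hσ i
    set π' : ℕ → SatState n m := detState σ' hσ' s₀ with hπ'def
    -- the first visit to a negative literal state of v
    have hex : ∃ t, ∃ j : Fin m, π t = Sum.inr (Sum.inl (j, (false, v))) :=
      ⟨2*k₀+1, ⟨k₀ % m, jlt k₀⟩, by rw [hLch_eq k₀, hk₀]⟩
    set t₀ := Nat.find hex with ht₀def
    obtain ⟨j₀, hj₀⟩ : ∃ j : Fin m, π t₀ = Sum.inr (Sum.inl (j, (false, v))) := Nat.find_spec hex
    have hmin : ∀ t, t < t₀ → ∀ j : Fin m, π t ≠ Sum.inr (Sum.inl (j, (false, v))) := by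
      intro t ht j hcon
      exact Nat.find_min hex ht ⟨j, hcon⟩
    -- the plays agree up to t₀
    have hagree : ∀ t, t ≤ t₀ → detH σ' hσ' s₀ t = detH σ hσ s₀ t := by
      intro t ht
      induction t with
      | zero => rfl
      | succ t iht =>
        have ht' : t < t₀ := by omega
        have hd := iht (by omega)
        have hforced : G.act v.succ (π t) = {Sum.inr false} := by
          rcases hshape t with ⟨k, rfl⟩ | ⟨k, rfl⟩
          · rw [(hplay k).1]
            exact satAct_clause_succ hm φ hφ v _
          · rw [hLch_eq k]
            rcases hLL : Lch k with ⟨b, w⟩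
            rw [satAct_lit, if_neg]
            rintro ⟨h1, h2⟩
            subst h2
            obtain rfl : v = w := Fin.succ_inj.mp h1
            exact hmin _ ht' _ (by rw [hLch_eq k, hLL])
        have hpp : pureProf σ' hσ' (detH σ hσ s₀ t).1 (detH σ hσ s₀ t).2
            = pureProf σ hσ (detH σ hσ s₀ t).1 (detH σ hσ s₀ t).2 := by
          funext i
          by_cases hii : i = v.succ
          · subst hii
            rw [show pureProf σ' hσ' (detH σ hσ s₀ t).1 (detH σ hσ s₀ t).2 v.succ
                = Sum.inr false from
                (σ' v.succ).pureAct_forced (hσ' v.succ) hforced _,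
              show pureProf σ hσ (detH σ hσ s₀ t).1 (detH σ hσ s₀ t).2 v.succ
                = Sum.inr false from
                (σ v.succ).pureAct_forced (hσ v.succ) hforced _]
          · show (σ' i).pureAct (hσ' i) _ _ = (σ i).pureAct (hσ i) _ _
            have hsi : σ' i = σ i := by rw [hσ'def, Function.update_of_ne hii]
            apply (σ' i).pureAct_eq_of_prob_one (hσ' i)
            rw [hsi]
            exact (σ i).pureAct_prob (hσ i) _ _
        have e3 : detH σ' hσ' s₀ (t+1)
            = ((detH σ' hσ' s₀ t).1 ++ [((detH σ' hσ' s₀ t).2,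
                pureProf σ' hσ' (detH σ' hσ' s₀ t).1 (detH σ' hσ' s₀ t).2)],
              G.tr (detH σ' hσ' s₀ t).2
                (pureProf σ' hσ' (detH σ' hσ' s₀ t).1 (detH σ' hσ' s₀ t).2)) := rfl
        rw [e3, hd, hpp]
        rfl
    -- at t₀ the deviator quits
    have hquit : π' (t₀+1) = Sum.inr (Sum.inr ()) := by
      have e4 : π' (t₀+1) = G.tr (detH σ' hσ' s₀ t₀).2
          (pureProf σ' hσ' (detH σ' hσ' s₀ t₀).1 (detH σ' hσ' s₀ t₀).2) := rfl
      rw [e4, hagree t₀ le_rfl]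
      set a := pureProf σ' hσ' (detH σ hσ s₀ t₀).1 (detH σ hσ s₀ t₀).2 with haa
      have e5 : a v.succ = qact (detH σ hσ s₀ t₀).2 := by
        rw [haa]
        show (σ' v.succ).pureAct (hσ' v.succ) _ _ = _
        apply (σ' v.succ).pureAct_eq_of_prob_one (hσ' v.succ)
        have hsv : σ' v.succ = τ := by rw [hσ'def, Function.update_self]
        rw [hsv, hτ]
        exact posStrat_prob G v.succ qact hqmem _ _
      have hst : (detH σ hσ s₀ t₀).2 = Sum.inr (Sum.inl (j₀, (false, v))) := hj₀
      rw [hst]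
      apply satTr_lit_quit hm φ hφ j₀ v
      rw [show a (Fin.succ v) = qact (detH σ hσ s₀ t₀).2 from e5, hst]
      simp [hqact]
    -- afterwards the deviated play stays at ⊥
    have habs' : ∀ t, t₀+1 ≤ t → π' t = Sum.inr (Sum.inr ()) := by
      intro t ht
      induction t with
      | zero => omega
      | succ t iht =>
        rcases Nat.lt_or_ge (t₀+1) (t+1) with h | h
        · have hh := iht (by omega)
          have e6 : π' (t+1) = G.tr (π' t)
              (pureProf σ' hσ' (detH σ' hσ' s₀ t).1 (detH σ' hσ' s₀ t).2) := rfl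
          rw [e6, hh]
          exact satTr_bot hm φ hφ _ ()
        · have : t₀+1 = t+1 := by omega
          rw [← this]
          exact hquit
    -- player v.succ's deviation payoff is 1
    have hr' : 1 ≤ G.payOf v.succ π' :=
      liminf_avg_ge_one (fun t => satRew_nonneg hm φ hφ _ (π' t))
        (fun t => satRew_le_one hm φ hφ _ (π' t)) (t₀+1)
        (fun t ht => by rw [habs' t ht]; exact satRew_succ_bot hm φ hφ v ())
    have hnash' := hnash v.succ τ
    rw [expPay_pure σ hσ s₀ v.succ] at hnash'
    rw [show Function.update σ v.succ τ = σ' from rfl] at hnash'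
    rw [expPay_pure σ' hσ' s₀ v.succ] at hnash'
    exact le_trans hr' hnash'
  -- Step D: read off a satisfying assignment
  set α : Fin n → Bool := fun v => if ∃ k, Lch k = (false, v) then false else true with hαdef
  have hαfalse : ∀ v, α v = false ↔ ∃ k, Lch k = (false, v) := by
    intro v
    rw [hαdef]
    by_cases h : ∃ k, Lch k = (false, v) <;> simp [h]
  refine ⟨α, ?_⟩
  intro j
  by_contra hcon
  push_neg at hcon
  -- every stage visiting clause j picks a "bad" positive literal
  have hbad : ∀ k, k % m = j.val → ∃ w, Lch k = (true, w) ∧ α w = false := by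
    intro k hk
    have hjeq : (⟨k % m, jlt k⟩ : Fin m) = j := Fin.ext hk
    have hmem : Lch k ∈ φ j := hjeq ▸ hLch_mem k
    rcases hLL : Lch k with ⟨b, w⟩
    have hne := hcon _ hmem
    rw [hLL] at hne
    have hne2 : α w ≠ b := by simpa using hne
    rcases b with _ | _
    · exact absurd ((hαfalse w).2 ⟨k, hLL⟩) hne2
    · refine ⟨w, rfl, ?_⟩
      revert hne2
      cases α w <;> simp
  -- zero-counts of bad variables have vanishing density
  have hdens : ∀ v : Fin n, α v = false →
      Filter.Tendsto (fun T : ℕ => (((Finset.range T).filter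
        (fun t => G.rew v.succ (π t) = 0)).card : ℝ) / T) Filter.atTop (nhds 0) := by
    intro v hv
    have hp := hkey v ((hαfalse v).1 hv)
    refine tendsto_cnt_of_liminf (r := fun t => G.rew v.succ (π t)) ?_ hp
    intro T
    constructor
    · exact le_trans (Finset.card_filter_le _ _) (le_of_eq (Finset.card_range T))
    · exact sum01 (fun t => satRew_01 hm φ hφ v.succ (π t)) T
  -- clause j is visited at least K/m times before time K
  have hcount1 : ∀ K : ℕ, K / m
      ≤ ((Finset.range K).filter (fun k => k % m = j.val)).card := by
    intro K
    have hmaps : ∀ q ∈ Finset.range (K / m),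
        q * m + j.val ∈ (Finset.range K).filter (fun k => k % m = j.val) := by
      intro q hq
      simp only [Finset.mem_range] at hq
      simp only [Finset.mem_filter, Finset.mem_range]
      constructor
      · have h2 : (q+1) * m ≤ (K/m) * m := Nat.mul_le_mul_right m hq
        have h3 : (K/m) * m ≤ K := Nat.div_mul_le_self K m
        have h4 : j.val < m := j.isLt
        calc q*m + j.val < q*m + m := by omega
          _ = (q+1)*m := by ring
          _ ≤ K := le_trans h2 h3
      · have e7 : q * m + j.val = j.val + q * m := by ring
        rw [e7, Nat.add_mul_mod_self_right]
        exact Nat.mod_eq_of_lt j.isLt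
    calc K / m = (Finset.range (K/m)).card := (Finset.card_range _).symm
      _ ≤ _ := Finset.card_le_card_of_injOn (fun q => q * m + j.val) hmaps
          (fun q1 _ q2 _ heq => by
            have heq' : q1 * m + j.val = q2 * m + j.val := heq
            have : q1 * m = q2 * m := by omega
            exact Nat.eq_of_mul_eq_mul_right hm this)
  set B : Finset (Fin n) := Finset.univ.filter (fun v => α v = false) with hB
  have hsub : ∀ K : ℕ, (Finset.range K).filter (fun k => k % m = j.val)
      ⊆ B.biUnion (fun v => (Finset.range K).filter (fun k => Lch k = (true, v))) := by
    intro K k hk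
    simp only [Finset.mem_filter, Finset.mem_range] at hk
    obtain ⟨w, hw1, hw2⟩ := hbad k hk.2
    refine Finset.mem_biUnion.2 ⟨w, ?_, ?_⟩
    · simp [hB, hw2]
    · simp only [Finset.mem_filter, Finset.mem_range]
      exact ⟨hk.1, hw1⟩
  have hcnt2 : ∀ (v : Fin n) (K : ℕ),
      ((Finset.range K).filter (fun k => Lch k = (true, v))).card
      ≤ ((Finset.range (2*K)).filter (fun t => G.rew v.succ (π t) = 0)).card := by
    intro v K
    apply Finset.card_le_card_of_injOn (fun k => 2*k+1)
    · intro k hk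
      simp only [Finset.coe_filter, Finset.mem_coe, Set.mem_setOf_eq, Finset.mem_filter, Finset.mem_range] at hk ⊢
      refine ⟨by omega, ?_⟩
      rw [show π (2*k+1) = Sum.inr (Sum.inl (⟨k % m, jlt k⟩, (true, v))) from by
        rw [hLch_eq k, hk.2]]
      rw [satRew_succ_lit]
      simp
    · intro a _ b _ h
      have h' : 2*a+1 = 2*b+1 := h
      omega
  set F : ℕ → ℕ := fun K => ∑ v ∈ B,
    ((Finset.range (2*K)).filter (fun t => G.rew v.succ (π t) = 0)).card with hF
  have hchain : ∀ K, K / m ≤ F K := by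
    intro K
    calc K / m ≤ ((Finset.range K).filter (fun k => k % m = j.val)).card := hcount1 K
      _ ≤ (B.biUnion fun v => (Finset.range K).filter (fun k => Lch k = (true, v))).card :=
          Finset.card_le_card (hsub K)
      _ ≤ ∑ v ∈ B, ((Finset.range K).filter (fun k => Lch k = (true, v))).card :=
          Finset.card_biUnion_le
      _ ≤ F K := Finset.sum_le_sum (fun v _ => hcnt2 v K)
  have h2K : Filter.Tendsto (fun K : ℕ => 2*K) Filter.atTop Filter.atTop :=
    Filter.tendsto_atTop_atTop_of_monotone (fun a b hab => by omega) (fun b => ⟨b, by omega⟩)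
  have hFlim : Filter.Tendsto (fun K : ℕ => (F K : ℝ) / K) Filter.atTop (nhds 0) := by
    have hterm : ∀ v ∈ B, Filter.Tendsto (fun K : ℕ =>
        (((Finset.range (2*K)).filter (fun t => G.rew v.succ (π t) = 0)).card : ℝ) / K)
        Filter.atTop (nhds 0) := by
      intro v hv
      have hv' : α v = false := by simpa [hB] using hv
      have h1 := (hdens v hv').comp h2K
      have h4 := h1.const_mul (2:ℝ)
      have h5 : Filter.Tendsto (fun K : ℕ => 2 * ((((Finset.range (2*K)).filter
          (fun t => G.rew v.succ (π t) = 0)).card : ℝ) / (2*K : ℕ)))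
          Filter.atTop (nhds 0) := by simpa using h4
      apply h5.congr'
      filter_upwards [Filter.eventually_ge_atTop 1] with K hK
      have hKne : (K:ℝ) ≠ 0 := by positivity
      push_cast
      rw [← mul_div_assoc, mul_div_mul_left _ _ (two_ne_zero)]
    have hsum := tendsto_finset_sum B hterm
    have : Filter.Tendsto (fun K : ℕ => ∑ v ∈ B, (((Finset.range (2*K)).filter
        (fun t => G.rew v.succ (π t) = 0)).card : ℝ) / K) Filter.atTop (nhds 0) := by
      simpa using hsum
    apply this.congr
    intro K
    rw [hF]
    push_cast
    rw [Finset.sum_div]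
  have hlow : Filter.Tendsto (fun K : ℕ => 1/(m:ℝ) - 1/K) Filter.atTop (nhds (1/(m:ℝ))) := by
    have := (tendsto_const_nhds (x := 1/(m:ℝ))).sub tendsto_one_div_atTop_nhds_zero_nat
    simpa using this
  have hle : ∀ᶠ K : ℕ in Filter.atTop, 1/(m:ℝ) - 1/K ≤ (F K : ℝ)/K := by
    filter_upwards [Filter.eventually_ge_atTop 1] with K hK
    have hKpos : (0:ℝ) < K := by exact_mod_cast hK
    have h5 : ((K / m : ℕ) : ℝ) ≤ (F K : ℝ) := by exact_mod_cast hchain K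
    have hmpos : (0:ℝ) < m := by exact_mod_cast hm
    have h6 : (K:ℝ)/m - 1 ≤ ((K/m : ℕ):ℝ) := by
      have h7 : K < m * (K/m) + m := by
        have hd := Nat.div_add_mod K m
        have hmod := Nat.mod_lt K hm
        omega
      have h8 : (K:ℝ) < m * ((K/m : ℕ):ℝ) + m := by exact_mod_cast h7
      have h9 : (K:ℝ)/m ≤ ((K/m : ℕ):ℝ) + 1 := by
        rw [div_le_iff₀ hmpos]
        nlinarith
      linarith
    calc 1/(m:ℝ) - 1/K = ((K:ℝ)/m - 1)/K := by field_simp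
      _ ≤ ((K/m : ℕ):ℝ)/K := div_le_div_of_nonneg_right h6 hKpos.le
      _ ≤ (F K : ℝ)/K := div_le_div_of_nonneg_right h5 hKpos.le
  have hfinal : 1/(m:ℝ) ≤ 0 := le_of_tendsto_of_tendsto hlow hFlim hle
  have : (0:ℝ) < 1/(m:ℝ) := by
    have hmpos : (0:ℝ) < m := by exact_mod_cast hm
    positivity
  linarith

end Backward

/-- For a CNF formula `φ = C₁ ∧ … ∧ C_m` with `m ≥ 1` and nonempty clauses: `φ` is satisfiable
iff `(G_φ, C₁)` has a pure Nash equilibrium with expected payoff ≥ 1 for player 0. -/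
theorem satisfiable_iff_pure_nash (n m : ℕ) (hm : 0 < m)
    (φ : Fin m → Finset (Lit n)) (hφ : ∀ j, (φ j).Nonempty) :
    SatSatisfiable n m φ ↔
      ∃ σ : Profile (satGame n m hm φ hφ), ConcurrentGame.IsPureProfile σ ∧
        (satGame n m hm φ hφ).IsNash σ (Sum.inl ⟨0, hm⟩) ∧
        1 ≤ (satGame n m hm φ hφ).expPay σ (Sum.inl ⟨0, hm⟩) 0 := by
  constructor
  · exact forward_dir n m hm φ hφ
  · rintro ⟨σ, hσ, hnash, hpay⟩
    exact backward_dir n m hm φ hφ σ hσ hnash hpay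

end
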